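/- Let X⁽²⁾ = a ∂_λ + a'λ_ε ∂_{λ_ε} + (a''λ_ε² + a'λ_εε) ∂_{λ_εε} be the second prolongation of X = a∂_λ, and let E₋₁ = λ_ε ∂_λ + λ_εε ∂_{λ_ε} + ((3/2)λ_εε²/λ_ε − R(λ)λ_ε³)∂_{λ_εε}, E₀ = λ_ε ∂_{λ_ε} + 2λ_εε ∂_{λ_εε}, E₁ = 2λ_ε ∂_{λ_εε}. Then [E₋₁, X⁽²⁾] = (a''' + 2R a' + R' a)·λ_ε³ ∂_{λ_εε}, and [E₀, X⁽²⁾] = [E₁, X⁽²⁾] = 0. In particular X⁽²⁾ commutes with E₋₁, E₀, E₁ if and only if a''' + 2R a' + R' a = 0. -/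

import Mathlib

/-- `E₋₁ = λ_ε ∂_λ + λ_εε ∂_{λ_ε} + ((3/2)λ_εε²/λ_ε − R(λ)λ_ε³)∂_{λ_εε}`. -/
noncomputable def Em1 (R : ℂ → ℂ) (p : ℂ × ℂ × ℂ) : ℂ × ℂ × ℂ :=
  (p.2.1, p.2.2, (3 / 2) * p.2.2 ^ 2 / p.2.1 - R p.1 * p.2.1 ^ 3)

/-- `E₀ = λ_ε ∂_{λ_ε} + 2λ_εε ∂_{λ_εε}`. -/
def E0 (p : ℂ × ℂ × ℂ) : ℂ × ℂ × ℂ := (0, p.2.1, 2 * p.2.2)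

/-- `E₁ = 2λ_ε ∂_{λ_εε}`. -/
def E1 (p : ℂ × ℂ × ℂ) : ℂ × ℂ × ℂ := (0, 0, 2 * p.2.1)

/-- The second prolongation `X⁽²⁾ = a ∂_λ + a'λ_ε ∂_{λ_ε} + (a''λ_ε² + a'λ_εε) ∂_{λ_εε}`
of `X = a∂_λ`. -/
noncomputable def X2 (a : ℂ → ℂ) (p : ℂ × ℂ × ℂ) : ℂ × ℂ × ℂ :=
  (a p.1, deriv a p.1 * p.2.1,
    deriv (deriv a) p.1 * p.2.1 ^ 2 + deriv a p.1 * p.2.2)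

open ContinuousLinearMap

private lemma hcomp (g : ℂ → ℂ) (hg : Differentiable ℂ g) (p : ℂ × ℂ × ℂ) :
    HasFDerivAt (fun q : ℂ × ℂ × ℂ => g q.1)
      ((smulRight (1 : ℂ →L[ℂ] ℂ) (deriv g p.1)).comp (fst ℂ ℂ (ℂ × ℂ))) p :=
  ((hg p.1).hasDerivAt.hasFDerivAt).comp p hasFDerivAt_fst

private lemma hY (p : ℂ × ℂ × ℂ) :
    HasFDerivAt (fun q : ℂ × ℂ × ℂ => q.2.1)
      ((fst ℂ ℂ ℂ).comp (snd ℂ ℂ (ℂ × ℂ))) p :=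
  hasFDerivAt_fst.comp p hasFDerivAt_snd

private lemma hZ (p : ℂ × ℂ × ℂ) :
    HasFDerivAt (fun q : ℂ × ℂ × ℂ => q.2.2)
      ((snd ℂ ℂ ℂ).comp (snd ℂ ℂ (ℂ × ℂ))) p :=
  hasFDerivAt_snd.comp p hasFDerivAt_snd

private lemma fderiv_X2_apply (a : ℂ → ℂ) (ha : Differentiable ℂ a)
    (ha' : Differentiable ℂ (deriv a)) (ha'' : Differentiable ℂ (deriv (deriv a)))
    (p q : ℂ × ℂ × ℂ) :
    fderiv ℂ (X2 a) p q =
      (deriv a p.1 * q.1,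
       deriv (deriv a) p.1 * q.1 * p.2.1 + deriv a p.1 * q.2.1,
       deriv (deriv (deriv a)) p.1 * q.1 * p.2.1 ^ 2
         + deriv (deriv a) p.1 * (2 * p.2.1 * q.2.1)
         + (deriv (deriv a) p.1 * q.1 * p.2.2 + deriv a p.1 * q.2.2)) := by
  have hx2 : X2 a = fun q : ℂ × ℂ × ℂ =>
      (a q.1, (deriv a q.1 * q.2.1,
        deriv (deriv a) q.1 * (q.2.1 * q.2.1) + deriv a q.1 * q.2.2)) := by
    funext q; simp [X2, pow_two]
  have H := (hcomp a ha p).prodMk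
      (((hcomp (deriv a) ha' p).mul (hY p)).prodMk
        (((hcomp (deriv (deriv a)) ha'' p).mul ((hY p).mul (hY p))).add
          ((hcomp (deriv a) ha' p).mul (hZ p))))
  simp only [Pi.mul_def, Pi.add_def, Pi.sub_def] at H
  rw [hx2, H.fderiv]
  simp
  ring_nf
  constructor
  · trivial
  constructor
  · trivial
  · trivial

private lemma fderiv_Em1_apply (R : ℂ → ℂ) (hR : Differentiable ℂ R)
    (p : ℂ × ℂ × ℂ) (hy : p.2.1 ≠ 0) (q : ℂ × ℂ × ℂ) :
    fderiv ℂ (Em1 R) p q =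
      (q.2.1, q.2.2,
        (3 / 2) * (2 * p.2.2 * q.2.2) / p.2.1
          - (3 / 2) * p.2.2 ^ 2 * q.2.1 / p.2.1 ^ 2
          - (deriv R p.1 * q.1 * p.2.1 ^ 3 + R p.1 * (3 * p.2.1 ^ 2 * q.2.1))) := by
  have hm : Em1 R = fun q : ℂ × ℂ × ℂ =>
      (q.2.1, (q.2.2,
        (3 / 2) * (q.2.2 * q.2.2) * (q.2.1)⁻¹ - R q.1 * (q.2.1 * (q.2.1 * q.2.1)))) := by
    funext q
    simp only [Em1, Prod.mk.injEq]
    refine ⟨trivial, trivial, ?_⟩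
    rw [div_eq_mul_inv]; ring
  have hinv := ((hasDerivAt_inv hy).hasFDerivAt).comp p (hY p)
  simp only [Function.comp_def] at hinv
  have H := (hY p).prodMk ((hZ p).prodMk
    (((((hZ p).mul (hZ p)).const_mul ((3:ℂ)/2)).mul hinv).sub
      ((hcomp R hR p).mul ((hY p).mul ((hY p).mul (hY p))))))
  simp only [Pi.mul_def, Pi.add_def, Pi.sub_def] at H
  rw [hm, H.fderiv]
  simp
  field_simp
  ring

private lemma fderiv_E0_apply (p q : ℂ × ℂ × ℂ) :
    fderiv ℂ E0 p q = (0, q.2.1, 2 * q.2.2) := by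
  have H := (hasFDerivAt_const (0 : ℂ) p).prodMk ((hY p).prodMk ((hZ p).const_mul (2 : ℂ)))
  rw [show E0 = (fun q : ℂ × ℂ × ℂ => ((0 : ℂ), q.2.1, 2 * q.2.2)) from rfl, H.fderiv]
  simp

private lemma fderiv_E1_apply (p q : ℂ × ℂ × ℂ) :
    fderiv ℂ E1 p q = (0, 0, 2 * q.2.1) := by
  have H := (hasFDerivAt_const (0 : ℂ) p).prodMk
    ((hasFDerivAt_const (0 : ℂ) p).prodMk ((hY p).const_mul (2 : ℂ)))
  rw [show E1 = (fun q : ℂ × ℂ × ℂ => ((0 : ℂ), (0 : ℂ), 2 * q.2.1)) from rfl, H.fderiv]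
  simp


/-- `[E₋₁, X⁽²⁾] = (a''' + 2R a' + R' a)·λ_ε³ ∂_{λ_εε}`, `[E₀, X⁽²⁾] = [E₁, X⁽²⁾] = 0`;
in particular `X⁽²⁾` commutes with `E₋₁, E₀, E₁` iff `a''' + 2R a' + R' a = 0`. -/
theorem prolongation_commutes_with_parallel_fields (R a : ℂ → ℂ)
    (hR : Differentiable ℂ R) (hR' : Differentiable ℂ (deriv R))
    (ha : Differentiable ℂ a) (ha' : Differentiable ℂ (deriv a))
    (ha'' : Differentiable ℂ (deriv (deriv a))) :
    (∀ p : ℂ × ℂ × ℂ, p.2.1 ≠ 0 →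
      VectorField.lieBracket ℂ (Em1 R) (X2 a) p
        = (0, 0, (deriv (deriv (deriv a)) p.1 + 2 * R p.1 * deriv a p.1
            + deriv R p.1 * a p.1) * p.2.1 ^ 3)) ∧
    (∀ p : ℂ × ℂ × ℂ, p.2.1 ≠ 0 → VectorField.lieBracket ℂ E0 (X2 a) p = 0) ∧
    (∀ p : ℂ × ℂ × ℂ, p.2.1 ≠ 0 → VectorField.lieBracket ℂ E1 (X2 a) p = 0) ∧
    ((∀ p : ℂ × ℂ × ℂ, p.2.1 ≠ 0 →
        VectorField.lieBracket ℂ (Em1 R) (X2 a) p = 0 ∧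
        VectorField.lieBracket ℂ E0 (X2 a) p = 0 ∧
        VectorField.lieBracket ℂ E1 (X2 a) p = 0) ↔
      ∀ l : ℂ, deriv (deriv (deriv a)) l + 2 * R l * deriv a l + deriv R l * a l = 0) := by
  have h1 : ∀ p : ℂ × ℂ × ℂ, p.2.1 ≠ 0 →
      VectorField.lieBracket ℂ (Em1 R) (X2 a) p
        = (0, 0, (deriv (deriv (deriv a)) p.1 + 2 * R p.1 * deriv a p.1
            + deriv R p.1 * a p.1) * p.2.1 ^ 3) := by
    intro p hy
    rw [VectorField.lieBracket, fderiv_X2_apply a ha ha' ha'',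
      fderiv_Em1_apply R hR p hy]
    simp only [Em1, X2, Prod.mk_sub_mk, Prod.mk.injEq]
    refine ⟨by ring, by ring, ?_⟩
    field_simp [hy]
    ring
  have h2 : ∀ p : ℂ × ℂ × ℂ, p.2.1 ≠ 0 → VectorField.lieBracket ℂ E0 (X2 a) p = 0 := by
    intro p hy
    rw [VectorField.lieBracket, fderiv_X2_apply a ha ha' ha'', fderiv_E0_apply]
    simp only [E0, X2, Prod.mk_sub_mk, Prod.mk_eq_zero]
    refine ⟨by ring_nf, by ring_nf, by ring_nf⟩
  have h3 : ∀ p : ℂ × ℂ × ℂ, p.2.1 ≠ 0 → VectorField.lieBracket ℂ E1 (X2 a) p = 0 := by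
    intro p hy
    rw [VectorField.lieBracket, fderiv_X2_apply a ha ha' ha'', fderiv_E1_apply]
    simp only [E1, X2, Prod.mk_sub_mk, Prod.mk_eq_zero]
    refine ⟨by ring_nf, by ring_nf, by ring_nf⟩
  refine ⟨h1, h2, h3, ?_⟩
  constructor
  · intro h l
    have := (h (l, 1, 0) one_ne_zero).1
    rw [h1 (l, 1, 0) one_ne_zero] at this
    simpa using congrArg (fun v : ℂ × ℂ × ℂ => v.2.2) this
  · intro h p hy
    refine ⟨?_, h2 p hy, h3 p hy⟩
    rw [h1 p hy, h p.1]
    simp
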